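/- Let θ > 0 and let g : ℝ → ℝ be continuous with g(t) ≥ 0 for all t ≥ 0. Let u : ℝ → ℝ be continuous, bounded, with u > 0 on ℝ, and let w : ℝ → ℝ be continuous with w(x) → −∞ as |x| → ∞. Assume that for every x ∈ ℝ the principal value ((−Δ)^{1/2}u)(x) exists and ((−Δ)^{1/2}u)(x) + u(x) = θ·w(x)·g(u(x)). Then u(x) = O(1/x²) as |x| → ∞: there exist constants C, d > 0 such that u(x) ≤ C/x² for all |x| ≥ d. -/

import Mathlib

open MeasureTheory Real Filter Set
open scoped ENNReal Topology

noncomputable section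

/-- `((−Δ)^{1/2}u)(x) = L` in the principal-value sense:
`(1/π)·∫_{|x−y|>ε} (u(x) − u(y))/(x − y)² dy → L` as `ε → 0⁺`. -/
def HasHalfLapAt (u : ℝ → ℝ) (x L : ℝ) : Prop :=
  Tendsto (fun ε : ℝ =>
      (1 / π) * ∫ y in {y : ℝ | ε < |x - y|}, (u x - u y) / (x - y) ^ 2)
    (nhdsWithin 0 (Set.Ioi 0)) (nhds L)

/-- `v ∈ L¹_log(ℝ)`: `v` is integrable and `∫ log(1+|x|)|v(x)| dx < ∞`. -/
def MemL1log (v : ℝ → ℝ) : Prop :=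
  Integrable v (volume : Measure ℝ) ∧
    Integrable (fun x => Real.log (1 + |x|) * |v x|) (volume : Measure ℝ)

namespace HalfAux

lemma ray_eq {x ε : ℝ} (hε : 0 < ε) :
    {y : ℝ | ε < |x - y|} = Iio (x - ε) ∪ Ioi (x + ε) := by
  ext y
  simp only [mem_setOf_eq, mem_union, mem_Iio, mem_Ioi, lt_abs]
  constructor
  · rintro (h | h)
    · left; linarith
    · right; linarith
  · rintro (h | h)
    · left; linarith
    · right; linarith

lemma ray_measurable (x ε : ℝ) : MeasurableSet {y : ℝ | ε < |x - y|} :=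
  (isOpen_lt continuous_const (continuous_const.sub continuous_id).abs).measurableSet

/-- Iic analog of `integrableOn_Ioi_deriv_of_nonneg'`. -/
lemma integrableOn_Iic_deriv_of_nonneg'' {g g' : ℝ → ℝ} {b l : ℝ}
    (hderiv : ∀ x ∈ Iic b, HasDerivAt g (g' x) x)
    (hpos : ∀ x ∈ Iio b, 0 ≤ g' x) (hg : Tendsto g atBot (𝓝 l)) :
    IntegrableOn g' (Iic b) := by
  have hdg : ∀ t ∈ Ici (-b), HasDerivAt (fun t => -g (-t)) (g' (-t)) t := by
    intro t ht
    have h1 : -t ∈ Iic b := by simp only [mem_Ici] at ht; simp only [mem_Iic]; linarith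
    have := (HasDerivAt.scomp t (hderiv (-t) h1) (hasDerivAt_neg' t)).neg
    simp at this; exact this
  have hint : IntegrableOn (fun t => g' (-t)) (Ioi (-b)) := by
    refine integrableOn_Ioi_deriv_of_nonneg' (l := -l) hdg (fun t ht => hpos (-t) ?_) ?_
    · simp only [mem_Ioi] at ht; simp only [mem_Iio]; linarith
    · exact (hg.comp tendsto_neg_atTop_atBot).neg
  have hint' : IntegrableOn (fun t => g' (-t)) (Ici (-b)) :=
    (integrableOn_Ici_iff_integrableOn_Ioi).2 hint
  have hpre : IntegrableOn (g' ∘ (fun t : ℝ => -t)) ((fun t : ℝ => -t) ⁻¹' (Iic b)) := by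
    have : ((fun t : ℝ => -t) ⁻¹' (Iic b)) = Ici (-b) := by
      ext t; simp only [mem_preimage, mem_Iic, mem_Ici]; constructor <;> intro <;> linarith
    rw [this]; exact hint'
  exact (MeasurePreserving.integrableOn_comp_preimage (Measure.measurePreserving_neg _)
    (Homeomorph.neg ℝ).measurableEmbedding).1 hpre

lemma intOn_inv_sq_Ioi {c b : ℝ} (h : c < b) :
    IntegrableOn (fun y => ((y - c) ^ 2)⁻¹) (Ioi b) := by
  have hd : ∀ y ∈ Ici b, HasDerivAt (fun y : ℝ => -(y - c)⁻¹) (((y - c) ^ 2)⁻¹) y := by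
    intro y hy
    have hne : y - c ≠ 0 := sub_ne_zero.2 (by simp only [mem_Ici] at hy; intro e; linarith [e ▸ hy])
    have := (((hasDerivAt_id y).sub_const c).inv hne).fun_neg
    refine this.congr_deriv ?_
    field_simp
    simp only [id_eq]; exact div_self (pow_ne_zero 2 hne)
  refine integrableOn_Ioi_deriv_of_nonneg' (l := 0) hd (fun y _ => inv_nonneg.2 (sq_nonneg _)) ?_
  have : Tendsto (fun y : ℝ => (y - c)⁻¹) atTop (𝓝 0) := by
    apply tendsto_inv_atTop_zero.comp
    exact tendsto_atTop_add_const_right atTop (-c) tendsto_id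
  simpa using this.neg

lemma intOn_inv_sq_Iic {c b : ℝ} (h : b < c) :
    IntegrableOn (fun y => ((y - c) ^ 2)⁻¹) (Iic b) := by
  have hd : ∀ y ∈ Iic b, HasDerivAt (fun y : ℝ => -(y - c)⁻¹) (((y - c) ^ 2)⁻¹) y := by
    intro y hy
    have hne : y - c ≠ 0 := by
      simp only [mem_Iic] at hy; intro e; rw [sub_eq_zero] at e; linarith
    have := (((hasDerivAt_id y).sub_const c).inv hne).fun_neg
    refine this.congr_deriv ?_
    field_simp
    simp only [id_eq]; exact div_self (pow_ne_zero 2 hne)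
  refine integrableOn_Iic_deriv_of_nonneg'' (l := 0) hd (fun y _ => inv_nonneg.2 (sq_nonneg _)) ?_
  have h1 : Tendsto (fun t : ℝ => (t + c)⁻¹) atTop (𝓝 0) :=
    tendsto_inv_atTop_zero.comp (tendsto_atTop_add_const_right atTop c tendsto_id)
  have h2 := (h1.comp tendsto_neg_atBot_atTop).neg
  have h3 : Tendsto (fun y : ℝ => (y - c)⁻¹) atBot (𝓝 0) := by
    simp only [Function.comp] at h2
    convert h2 using 2 with y
    · rw [show -y + c = -(y - c) by ring, inv_neg, neg_neg]
    · simp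
  simpa using h3.neg

/-- Integrability, on the two rays, of a ratio with bounded measurable numerator. -/
lemma intOn_ray_bounded {v : ℝ → ℝ} (hv : Measurable v) {A x ε : ℝ} (hε : 0 < ε)
    (hA : ∀ y, |v y| ≤ A) :
    IntegrableOn (fun y => v y / (x - y) ^ 2) (Iio (x - ε) ∪ Ioi (x + ε)) := by
  have hg : IntegrableOn (fun y => A * ((y - x) ^ 2)⁻¹) (Iio (x - ε) ∪ Ioi (x + ε)) := by
    refine IntegrableOn.union ?_ ?_
    · exact ((intOn_inv_sq_Iic (show x - ε < x by linarith)).mono_set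
        Iio_subset_Iic_self).const_mul A
    · exact (intOn_inv_sq_Ioi (show x < x + ε by linarith)).const_mul A
  have hm : AEStronglyMeasurable (fun y => v y / (x - y) ^ 2)
      (volume.restrict (Iio (x - ε) ∪ Ioi (x + ε))) := by
    refine (Measurable.aestronglyMeasurable ?_)
    exact hv.div (((measurable_const.sub measurable_id).pow_const 2))
  refine Integrable.mono' hg hm ?_
  refine (ae_restrict_iff' (measurableSet_Iio.union measurableSet_Ioi)).2 ?_
  refine .of_forall fun y hy => ?_
  have hyx : x - y ≠ 0 := by
    rcases hy with hy | hy
    · simp only [mem_Iio] at hy; intro e; rw [sub_eq_zero] at e; linarith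
    · simp only [mem_Ioi] at hy; intro e; rw [sub_eq_zero] at e; linarith
  have hpos : 0 < (x - y) ^ 2 := by positivity
  calc ‖v y / (x - y) ^ 2‖ = |v y| / (x - y) ^ 2 := by
        rw [Real.norm_eq_abs, abs_div, abs_of_nonneg (sq_nonneg (x - y))]
    _ ≤ A / (x - y) ^ 2 := by gcongr; exact hA y
    _ = A * ((y - x) ^ 2)⁻¹ := by
        rw [div_eq_mul_inv, show (x - y) ^ 2 = (y - x) ^ 2 by ring]


lemma nonneg_of_max {v : ℝ → ℝ} {x0 L : ℝ} (h : HasHalfLapAt v x0 L)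
    (hmax : ∀ y, v y ≤ v x0) : 0 ≤ L := by
  refine ge_of_tendsto h ?_
  filter_upwards [self_mem_nhdsWithin] with ε hε
  refine mul_nonneg (by positivity) ?_
  refine setIntegral_nonneg (ray_measurable x0 ε) fun y _ => ?_
  exact div_nonneg (sub_nonneg.2 (hmax y)) (sq_nonneg _)

lemma combo {u1 u2 u3 : ℝ → ℝ} {x L1 L2 L3 c2 c3 : ℝ}
    (h1 : HasHalfLapAt u1 x L1) (h2 : HasHalfLapAt u2 x L2) (h3 : HasHalfLapAt u3 x L3)
    (hi1 : ∀ ε : ℝ, 0 < ε → IntegrableOn (fun y => (u1 x - u1 y) / (x - y) ^ 2) {y | ε < |x - y|})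
    (hi2 : ∀ ε : ℝ, 0 < ε → IntegrableOn (fun y => (u2 x - u2 y) / (x - y) ^ 2) {y | ε < |x - y|})
    (hi3 : ∀ ε : ℝ, 0 < ε → IntegrableOn (fun y => (u3 x - u3 y) / (x - y) ^ 2) {y | ε < |x - y|}) :
    HasHalfLapAt (fun y => u1 y - c2 * u2 y - c3 * u3 y) x (L1 - c2 * L2 - c3 * L3) := by
  have ht : Tendsto (fun ε : ℝ =>
      ((1 / π) * ∫ y in {y : ℝ | ε < |x - y|}, (u1 x - u1 y) / (x - y) ^ 2)
      - c2 * ((1 / π) * ∫ y in {y : ℝ | ε < |x - y|}, (u2 x - u2 y) / (x - y) ^ 2)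
      - c3 * ((1 / π) * ∫ y in {y : ℝ | ε < |x - y|}, (u3 x - u3 y) / (x - y) ^ 2))
      (nhdsWithin 0 (Set.Ioi 0)) (nhds (L1 - c2 * L2 - c3 * L3)) :=
    (h1.sub (h2.const_mul c2)).sub (h3.const_mul c3)
  refine ht.congr' ?_
  filter_upwards [self_mem_nhdsWithin] with ε hε
  have hε' : (0 : ℝ) < ε := hε
  have h23 : IntegrableOn (fun y => c2 * ((u2 x - u2 y) / (x - y) ^ 2)
      + c3 * ((u3 x - u3 y) / (x - y) ^ 2)) {y | ε < |x - y|} :=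
    ((hi2 ε hε').const_mul c2).add ((hi3 ε hε').const_mul c3)
  have hint : (∫ y in {y : ℝ | ε < |x - y|},
      ((u1 x - c2 * u2 x - c3 * u3 x) - (u1 y - c2 * u2 y - c3 * u3 y)) / (x - y) ^ 2)
      = (∫ y in {y : ℝ | ε < |x - y|}, (u1 x - u1 y) / (x - y) ^ 2)
        - c2 * (∫ y in {y : ℝ | ε < |x - y|}, (u2 x - u2 y) / (x - y) ^ 2)
        - c3 * (∫ y in {y : ℝ | ε < |x - y|}, (u3 x - u3 y) / (x - y) ^ 2) := by
    have e0 : (∫ y in {y : ℝ | ε < |x - y|},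
        ((u1 x - c2 * u2 x - c3 * u3 x) - (u1 y - c2 * u2 y - c3 * u3 y)) / (x - y) ^ 2)
        = ∫ y in {y : ℝ | ε < |x - y|}, ((u1 x - u1 y) / (x - y) ^ 2
          - (c2 * ((u2 x - u2 y) / (x - y) ^ 2) + c3 * ((u3 x - u3 y) / (x - y) ^ 2))) :=
      integral_congr_ae (.of_forall fun y => by simp only [div_eq_mul_inv]; ring)
    rw [e0, integral_sub (hi1 ε hε') h23,
      integral_add ((hi2 ε hε').const_mul c2) ((hi3 ε hε').const_mul c3),
      integral_const_mul, integral_const_mul]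
    ring
  simp only [hint]
  ring


lemma inv_tendsto_atBot : Tendsto (fun y : ℝ => y⁻¹) atBot (𝓝 (0:ℝ)) := by
  have h : Tendsto (fun y : ℝ => -(-y)⁻¹) atBot (𝓝 (-0)) :=
    Tendsto.neg (tendsto_inv_atTop_zero.comp tendsto_neg_atBot_atTop)
  rw [neg_zero] at h
  exact h.congr fun y => by rw [inv_neg, neg_neg]

lemma ratio_tendsto {x : ℝ} {l : Filter ℝ}
    (hinv : Tendsto (fun y : ℝ => y⁻¹) l (𝓝 0)) (h0 : ∀ᶠ y : ℝ in l, y ≠ 0) :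
    Tendsto (fun y => (y - x) ^ 2 / (1 + y ^ 2)) l (𝓝 1) := by
  have h1 : ContinuousAt (fun t : ℝ => (1 - x * t) ^ 2 / (t ^ 2 + 1)) 0 := by
    apply ContinuousAt.div (by fun_prop) (by fun_prop) (by norm_num)
  have hc : Tendsto (fun t : ℝ => (1 - x * t) ^ 2 / (t ^ 2 + 1)) (𝓝 0) (𝓝 1) := by
    have := h1.tendsto
    norm_num at this
    exact this
  refine (hc.comp hinv).congr' ?_
  filter_upwards [h0] with y hy
  have h2 : (1:ℝ) + y ^ 2 ≠ 0 := by positivity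
  simp only [Function.comp]
  field_simp

lemma pv_phi (x : ℝ) :
    HasHalfLapAt (fun y => (1 + y ^ 2)⁻¹) x ((1 - x ^ 2) / (1 + x ^ 2) ^ 2) := by
  have hs0 : (0:ℝ) < 1 + x ^ 2 := by positivity
  set p : ℝ := x / (1 + x ^ 2) ^ 2 with hp
  set r : ℝ := (1 - x ^ 2) / (1 + x ^ 2) ^ 2 with hr
  set F : ℝ → ℝ := fun y => p * Real.log ((y - x) ^ 2 / (1 + y ^ 2)) + r * Real.arctan y with hF
  set f : ℝ → ℝ := fun y => ((1 + x ^ 2)⁻¹ - (1 + y ^ 2)⁻¹) / (x - y) ^ 2 with hf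
  -- derivative of the antiderivative
  have hder : ∀ y : ℝ, y ≠ x → HasDerivAt F (f y) y := by
    intro y hyx
    have hy2 : (0:ℝ) < 1 + y ^ 2 := by positivity
    have hyx' : y - x ≠ 0 := sub_ne_zero.2 hyx
    have hrat : (y - x) ^ 2 / (1 + y ^ 2) ≠ 0 :=
      (div_pos (by positivity) hy2).ne'
    have hd1 : HasDerivAt (fun y : ℝ => (y - x) ^ 2) (2 * (y - x)) y := by
      simpa using ((hasDerivAt_id y).sub_const x).fun_pow 2
    have hd2 : HasDerivAt (fun y : ℝ => 1 + y ^ 2) (2 * y) y := by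
      simpa using (hasDerivAt_pow 2 y).const_add 1
    have hdrat := hd1.fun_div hd2 hy2.ne'
    have hdlog' := hdrat.log hrat
    have hdlog : HasDerivAt (fun y : ℝ => Real.log ((y - x) ^ 2 / (1 + y ^ 2)))
        (2 / (y - x) - 2 * y / (1 + y ^ 2)) y := by
      convert hdlog' using 1
      field_simp
    have hdat : HasDerivAt Real.arctan (1 / (1 + y ^ 2)) y := Real.hasDerivAt_arctan y
    have hcomb := (hdlog.const_mul p).fun_add (hdat.const_mul r)
    refine hcomb.congr_deriv ?_
    rw [hf, hp, hr]
    have hxy2 : (x - y) ^ 2 ≠ 0 := pow_ne_zero _ (sub_ne_zero.2 (Ne.symm hyx))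
    field_simp
    ring
  -- limits at ±∞
  have hFtop : Tendsto F atTop (𝓝 (r * (π / 2))) := by
    have h1 : Tendsto (fun y : ℝ => Real.log ((y - x) ^ 2 / (1 + y ^ 2))) atTop (𝓝 0) := by
      have := (Real.continuousAt_log one_ne_zero).tendsto.comp
        (ratio_tendsto (x := x) tendsto_inv_atTop_zero
          ((eventually_gt_atTop 0).mono fun y hy => hy.ne'))
      simp at this; exact this
    have h2 : Tendsto Real.arctan atTop (𝓝 (π / 2)) :=
      tendsto_arctan_atTop.mono_right nhdsWithin_le_nhds
    have := (h1.const_mul p).add (h2.const_mul r)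
    simpa using this
  have hFbot : Tendsto F atBot (𝓝 (r * (-(π / 2)))) := by
    have h1 : Tendsto (fun y : ℝ => Real.log ((y - x) ^ 2 / (1 + y ^ 2))) atBot (𝓝 0) := by
      have := (Real.continuousAt_log one_ne_zero).tendsto.comp
        (ratio_tendsto (x := x) inv_tendsto_atBot
          ((eventually_lt_atBot 0).mono fun y hy => hy.ne))
      simp at this; exact this
    have h2 : Tendsto Real.arctan atBot (𝓝 (-(π / 2))) :=
      tendsto_arctan_atBot.mono_right nhdsWithin_le_nhds
    have := (h1.const_mul p).add (h2.const_mul r)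
    simpa using this
  -- integrability
  have hbound : ∀ y : ℝ, |(1 + x ^ 2)⁻¹ - (1 + y ^ 2)⁻¹| ≤ (1 + x ^ 2)⁻¹ + 1 := by
    intro y
    have h1 : (0:ℝ) < 1 + y ^ 2 := by positivity
    have h2 : (1 + y ^ 2)⁻¹ ≤ 1 := by
      have h2' : (1 + y ^ 2)⁻¹ ≤ (1:ℝ)⁻¹ := by gcongr <;> nlinarith
      simpa using h2'
    have h3 : (0:ℝ) ≤ (1 + y ^ 2)⁻¹ := by positivity
    rw [abs_sub_comm]
    calc |(1 + y ^ 2)⁻¹ - (1 + x ^ 2)⁻¹| ≤ |(1 + y ^ 2)⁻¹| + |(1 + x ^ 2)⁻¹| := abs_sub _ _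
      _ ≤ (1 + x ^ 2)⁻¹ + 1 := by
          rw [abs_of_nonneg h3, abs_of_nonneg (by positivity : (0:ℝ) ≤ (1 + x ^ 2)⁻¹)]
          linarith
  have hunion : ∀ ε : ℝ, 0 < ε → IntegrableOn f (Iio (x - ε) ∪ Ioi (x + ε)) := by
    intro ε hε
    exact intOn_ray_bounded (by fun_prop) hε hbound
  -- explicit truncated integral
  have key : ∀ ε : ℝ, 0 < ε → (∫ y in {y : ℝ | ε < |x - y|}, f y) =
      r * π + p * (Real.log (1 + (x + ε) ^ 2) - Real.log (1 + (x - ε) ^ 2))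
        + r * (Real.arctan (x - ε) - Real.arctan (x + ε)) := by
    intro ε hε
    have hIoi : IntegrableOn f (Ioi (x + ε)) :=
      (hunion ε hε).mono_set subset_union_right
    have hIic : IntegrableOn f (Iic (x - ε)) := by
      refine (integrableOn_Iic_iff_integrableOn_Iio).2 ?_
      exact (hunion ε hε).mono_set subset_union_left
    have hdisj : Disjoint (Iio (x - ε)) (Ioi (x + ε)) := by
      rw [Set.disjoint_left]
      intro y h1 h2
      simp only [mem_Iio, mem_Ioi] at h1 h2
      linarith
    rw [ray_eq hε, setIntegral_union hdisj measurableSet_Ioi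
      ((hunion ε hε).mono_set subset_union_left) hIoi]
    have hIoi_val : (∫ y in Ioi (x + ε), f y) = r * (π / 2) - F (x + ε) := by
      refine integral_Ioi_of_hasDerivAt_of_tendsto' (fun y hy => hder y ?_) hIoi hFtop
      simp only [mem_Ici] at hy; intro e; rw [e] at hy; linarith
    have hIio_val : (∫ y in Iio (x - ε), f y) = F (x - ε) - r * (-(π / 2)) := by
      rw [← integral_Iic_eq_integral_Iio]
      refine integral_Iic_of_hasDerivAt_of_tendsto' (fun y hy => hder y ?_) hIic hFbot
      simp only [mem_Iic] at hy; intro e; rw [e] at hy; linarith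
    rw [hIoi_val, hIio_val]
    have hε0 : ε ≠ 0 := hε.ne'
    have e1 : F (x - ε) = p * (Real.log (ε ^ 2) - Real.log (1 + (x - ε) ^ 2))
        + r * Real.arctan (x - ε) := by
      have hb : F (x - ε) = p * Real.log ((x - ε - x) ^ 2 / (1 + (x - ε) ^ 2))
          + r * Real.arctan (x - ε) := rfl
      rw [hb, show (x - ε - x) ^ 2 = ε ^ 2 by ring,
        Real.log_div (by positivity) (by positivity)]
    have e2 : F (x + ε) = p * (Real.log (ε ^ 2) - Real.log (1 + (x + ε) ^ 2))
        + r * Real.arctan (x + ε) := by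
      have hb : F (x + ε) = p * Real.log ((x + ε - x) ^ 2 / (1 + (x + ε) ^ 2))
          + r * Real.arctan (x + ε) := rfl
      rw [hb, show (x + ε - x) ^ 2 = ε ^ 2 by ring,
        Real.log_div (by positivity) (by positivity)]
    rw [e1, e2]
    ring
  -- limit of the explicit formula
  have hlim : Tendsto (fun ε : ℝ => (1 / π) *
      (r * π + p * (Real.log (1 + (x + ε) ^ 2) - Real.log (1 + (x - ε) ^ 2))
        + r * (Real.arctan (x - ε) - Real.arctan (x + ε)))) (𝓝[>] (0:ℝ)) (𝓝 r) := by
    have hc : ContinuousAt (fun ε : ℝ => (1 / π) *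
        (r * π + p * (Real.log (1 + (x + ε) ^ 2) - Real.log (1 + (x - ε) ^ 2))
          + r * (Real.arctan (x - ε) - Real.arctan (x + ε)))) 0 := by
      refine continuousAt_const.mul (ContinuousAt.add (ContinuousAt.add continuousAt_const
        (continuousAt_const.mul (ContinuousAt.sub ?_ ?_))) (continuousAt_const.mul
          (ContinuousAt.sub ?_ ?_)))
      · exact ContinuousAt.log (by fun_prop) (by positivity)
      · exact ContinuousAt.log (by fun_prop) (by positivity)
      · exact (Real.continuous_arctan.comp (continuous_const.sub continuous_id)).continuousAt
      · exact (Real.continuous_arctan.comp (continuous_const.add continuous_id)).continuousAt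
    have h0 : (1 / π) * (r * π + p * (Real.log (1 + (x + 0) ^ 2) - Real.log (1 + (x - 0) ^ 2))
        + r * (Real.arctan (x - 0) - Real.arctan (x + 0))) = r := by
      simp only [add_zero, sub_zero, sub_self, mul_zero, add_zero]
      field_simp
    have := hc.tendsto.mono_left (nhdsWithin_le_nhds (s := Set.Ioi (0:ℝ)))
    rw [h0] at this
    exact this
  -- conclude
  refine hlim.congr' ?_
  filter_upwards [self_mem_nhdsWithin] with ε (hε : (0:ℝ) < ε)
  have : (∫ y in {y : ℝ | ε < |x - y|},
      ((fun y : ℝ => (1 + y ^ 2)⁻¹) x - (1 + y ^ 2)⁻¹) / (x - y) ^ 2)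
      = ∫ y in {y : ℝ | ε < |x - y|}, f y := rfl
  rw [this, key ε hε]


section PVlog

variable {x : ℝ}

/-- log y / y → 0 helper -/
lemma log_div_self_tendsto : Tendsto (fun y : ℝ => Real.log y / y) atTop (𝓝 0) :=
  Real.isLittleO_log_id_atTop.tendsto_div_nhds_zero

lemma log_mul_inv_top (x : ℝ) :
    Tendsto (fun y : ℝ => Real.log (1 + y ^ 2) * (x - y)⁻¹) atTop (𝓝 0) := by
  have htail : Tendsto (fun y : ℝ => 6 * (Real.log y / y)) atTop (𝓝 0) := by
    simpa using log_div_self_tendsto.const_mul 6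
  refine squeeze_zero_norm' ?_ htail
  filter_upwards [eventually_ge_atTop (2:ℝ), eventually_ge_atTop (2*x)] with y h2 h2x
  have hy1 : (1:ℝ) ≤ y := by linarith
  have hypos : (0:ℝ) < y := by linarith
  have hyx2 : y / 2 ≤ y - x := by linarith
  have hyxpos : (0:ℝ) < y - x := by linarith
  have hlog1 : Real.log (1 + y ^ 2) ≤ 3 * Real.log y := by
    have h3 : (1:ℝ) + y ^ 2 ≤ y ^ 3 := by nlinarith
    calc Real.log (1 + y ^ 2) ≤ Real.log (y ^ 3) := Real.log_le_log (by positivity) h3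
      _ = 3 * Real.log y := by rw [Real.log_pow]; norm_num
  have hlognn : 0 ≤ Real.log (1 + y ^ 2) := Real.log_nonneg (by nlinarith)
  have hlogynn : 0 ≤ Real.log y := Real.log_nonneg hy1
  rw [Real.norm_eq_abs, abs_mul, abs_of_nonneg hlognn, abs_inv,
    abs_of_neg (by linarith : x - y < 0), neg_sub]
  have h5 : (y - x)⁻¹ ≤ 2 / y := by
    rw [show (2:ℝ) / y = (y / 2)⁻¹ by rw [inv_div]]
    gcongr
  calc Real.log (1 + y ^ 2) * (y - x)⁻¹ ≤ (3 * Real.log y) * (2 / y) := by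
        apply mul_le_mul hlog1 h5 (by positivity) (by positivity)
    _ = 6 * (Real.log y / y) := by ring

lemma log_mul_inv_bot (x : ℝ) :
    Tendsto (fun y : ℝ => Real.log (1 + y ^ 2) * (x - y)⁻¹) atBot (𝓝 0) := by
  have h := (log_mul_inv_top (-x)).comp tendsto_neg_atBot_atTop
  have h2 := h.neg
  rw [neg_zero] at h2
  refine h2.congr fun y => ?_
  show -((Real.log (1 + (-y) ^ 2)) * (-x - -y)⁻¹) = _
  rw [show (-y : ℝ) ^ 2 = y ^ 2 by ring, show (-x - -y : ℝ) = -(x - y) by ring,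
    inv_neg, mul_neg, neg_neg]

lemma hasDerivAt_logsq (y : ℝ) :
    HasDerivAt (fun y : ℝ => Real.log (1 + y ^ 2)) (2 * y / (1 + y ^ 2)) y := by
  have hy2 : (0:ℝ) < 1 + y ^ 2 := by positivity
  have := ((hasDerivAt_pow 2 y).const_add 1).log hy2.ne'
  convert this using 1
  norm_num

lemma pv_log (hx : x ≠ 0) :
    HasHalfLapAt (fun y => Real.log (1 + y ^ 2)) x (-2 / (1 + x ^ 2)) ∧
    ∀ ε : ℝ, 0 < ε → IntegrableOn
      (fun y => (Real.log (1 + x ^ 2) - Real.log (1 + y ^ 2)) / (x - y) ^ 2)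
      {y : ℝ | ε < |x - y|} := by
  have hs0 : (0:ℝ) < 1 + x ^ 2 := by positivity
  set a : ℝ := 2 * x / (1 + x ^ 2) with ha
  set L : ℝ := Real.log (1 + x ^ 2) with hL
  set G : ℝ → ℝ := fun y => (L - Real.log (1 + y ^ 2)) * (x - y)⁻¹
      + (a / 2) * Real.log ((1 + y ^ 2) / (y - x) ^ 2) - (a / x) * Real.arctan y with hG
  set f : ℝ → ℝ := fun y => (L - Real.log (1 + y ^ 2)) / (x - y) ^ 2 with hf
  -- derivative of the antiderivative
  have hder : ∀ y : ℝ, y ≠ x → HasDerivAt G (f y) y := by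
    intro y hyx
    have hy2 : (0:ℝ) < 1 + y ^ 2 := by positivity
    have hyx' : y - x ≠ 0 := sub_ne_zero.2 hyx
    have hxy' : x - y ≠ 0 := sub_ne_zero.2 (Ne.symm hyx)
    have hd0 := hasDerivAt_logsq y
    have hdA : HasDerivAt (fun y : ℝ => L - Real.log (1 + y ^ 2)) (-(2 * y / (1 + y ^ 2))) y :=
      hd0.const_sub L
    have hdB : HasDerivAt (fun y : ℝ => (x - y)⁻¹) (-(-1) / (x - y) ^ 2) y :=
      ((hasDerivAt_id y).const_sub x).inv hxy'
    have hd1 := hdA.fun_mul hdB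
    have hrat : (1 + y ^ 2) / (y - x) ^ 2 ≠ 0 := (div_pos hy2 (by positivity)).ne'
    have hdnum : HasDerivAt (fun y : ℝ => 1 + y ^ 2) (2 * y) y := by
      simpa using (hasDerivAt_pow 2 y).const_add 1
    have hdden : HasDerivAt (fun y : ℝ => (y - x) ^ 2) (2 * (y - x)) y := by
      simpa using ((hasDerivAt_id y).sub_const x).fun_pow 2
    have hdrat := hdnum.fun_div hdden (by positivity : (0:ℝ) < (y - x) ^ 2).ne'
    have hdlog2' := hdrat.log hrat
    have hdlog2 : HasDerivAt (fun y : ℝ => Real.log ((1 + y ^ 2) / (y - x) ^ 2))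
        (2 * y / (1 + y ^ 2) - 2 / (y - x)) y := by
      convert hdlog2' using 1
      field_simp
    have hdat : HasDerivAt Real.arctan (1 / (1 + y ^ 2)) y := Real.hasDerivAt_arctan y
    have hcomb := (hd1.fun_add (hdlog2.const_mul (a / 2))).fun_sub (hdat.const_mul (a / x))
    refine hcomb.congr_deriv ?_
    rw [hf, ha]
    field_simp
    ring
  -- limits at infinity
  have harctanTop : Tendsto Real.arctan atTop (𝓝 (π / 2)) :=
    tendsto_arctan_atTop.mono_right nhdsWithin_le_nhds
  have harctanBot : Tendsto Real.arctan atBot (𝓝 (-(π / 2))) :=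
    tendsto_arctan_atBot.mono_right nhdsWithin_le_nhds
  have hxyTop : Tendsto (fun y : ℝ => x - y) atTop atBot := by
    simpa [sub_eq_add_neg] using tendsto_atBot_add_const_left atTop x tendsto_neg_atTop_atBot
  have hxyBot : Tendsto (fun y : ℝ => x - y) atBot atTop := by
    simpa [sub_eq_add_neg] using tendsto_atTop_add_const_left atBot x tendsto_neg_atBot_atTop
  have hinvTop : Tendsto (fun y : ℝ => (x - y)⁻¹) atTop (𝓝 0) := inv_tendsto_atBot.comp hxyTop
  have hinvBot : Tendsto (fun y : ℝ => (x - y)⁻¹) atBot (𝓝 0) :=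
    tendsto_inv_atTop_zero.comp hxyBot
  have hinvTop2 : Tendsto (fun y : ℝ => (y - x)⁻¹) atTop (𝓝 0) := by
    apply tendsto_inv_atTop_zero.comp
    exact tendsto_atTop_add_const_right atTop (-x) tendsto_id
  have hinvBot2 : Tendsto (fun y : ℝ => (y - x)⁻¹) atBot (𝓝 0) := by
    apply inv_tendsto_atBot.comp
    exact tendsto_atBot_add_const_right atBot (-x) tendsto_id
  have hlogratTop : Tendsto (fun y : ℝ => Real.log ((1 + y ^ 2) / (y - x) ^ 2)) atTop (𝓝 0) := by
    have h1 : Tendsto (fun y : ℝ => (1 + y ^ 2) / (y - x) ^ 2) atTop (𝓝 1) := by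
      have h0 := (ratio_tendsto (x := x) tendsto_inv_atTop_zero
        ((eventually_gt_atTop 0).mono fun y hy => hy.ne')).inv₀ one_ne_zero
      rw [inv_one] at h0
      exact h0.congr fun y => by rw [inv_div]
    have h2 := (Real.continuousAt_log one_ne_zero).tendsto.comp h1
    simp at h2; exact h2
  have hlogratBot : Tendsto (fun y : ℝ => Real.log ((1 + y ^ 2) / (y - x) ^ 2)) atBot (𝓝 0) := by
    have h1 : Tendsto (fun y : ℝ => (1 + y ^ 2) / (y - x) ^ 2) atBot (𝓝 1) := by
      have h0 := (ratio_tendsto (x := x) inv_tendsto_atBot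
        ((eventually_lt_atBot 0).mono fun y hy => hy.ne)).inv₀ one_ne_zero
      rw [inv_one] at h0
      exact h0.congr fun y => by rw [inv_div]
    have h2 := (Real.continuousAt_log one_ne_zero).tendsto.comp h1
    simp at h2; exact h2
  have ht1Top : Tendsto (fun y : ℝ => (L - Real.log (1 + y ^ 2)) * (x - y)⁻¹) atTop (𝓝 0) := by
    have h1 := (hinvTop.const_mul L).sub (log_mul_inv_top x)
    rw [mul_zero, sub_zero] at h1
    exact h1.congr fun y => by ring
  have ht1Bot : Tendsto (fun y : ℝ => (L - Real.log (1 + y ^ 2)) * (x - y)⁻¹) atBot (𝓝 0) := by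
    have h1 := (hinvBot.const_mul L).sub (log_mul_inv_bot x)
    rw [mul_zero, sub_zero] at h1
    exact h1.congr fun y => by ring
  have hGtop : Tendsto G atTop (𝓝 (-(a / x * (π / 2)))) := by
    have h1 := (ht1Top.add (hlogratTop.const_mul (a / 2))).sub (harctanTop.const_mul (a / x))
    simpa using h1
  have hGbot : Tendsto G atBot (𝓝 (a / x * (π / 2))) := by
    have h1 := (ht1Bot.add (hlogratBot.const_mul (a / 2))).sub (harctanBot.const_mul (a / x))
    simpa using h1
  -- integrability on the rays
  have hWder : ∀ y : ℝ, y ≠ x → HasDerivAt (fun y => -(L * (y - x)⁻¹) - G y)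
      (Real.log (1 + y ^ 2) * ((y - x) ^ 2)⁻¹) y := by
    intro y hyx
    have hyx' : y - x ≠ 0 := sub_ne_zero.2 hyx
    have hxy' : x - y ≠ 0 := sub_ne_zero.2 (Ne.symm hyx)
    have hdL : HasDerivAt (fun y : ℝ => L * (y - x)⁻¹) (L * (-1 / (y - x) ^ 2)) y := by
      exact (((hasDerivAt_id y).sub_const x).inv hyx').const_mul L
    have hcb := hdL.fun_neg.fun_sub (hder y hyx)
    refine hcb.congr_deriv ?_
    rw [hf]
    field_simp
    ring
  have hWtop : Tendsto (fun y : ℝ => -(L * (y - x)⁻¹) - G y) atTop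
      (𝓝 (-(L * 0) - -(a / x * (π / 2)))) := (hinvTop2.const_mul L).neg.sub hGtop
  have hWbot : Tendsto (fun y : ℝ => -(L * (y - x)⁻¹) - G y) atBot
      (𝓝 (-(L * 0) - a / x * (π / 2))) := (hinvBot2.const_mul L).neg.sub hGbot
  have hunion : ∀ ε : ℝ, 0 < ε → IntegrableOn f (Iio (x - ε) ∪ Ioi (x + ε)) := by
    intro ε hε
    have hIoiW : IntegrableOn (fun y : ℝ => Real.log (1 + y ^ 2) * ((y - x) ^ 2)⁻¹)
        (Ioi (x + ε)) := by
      refine integrableOn_Ioi_deriv_of_nonneg'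
        (fun y hy => hWder y ?_)
        (fun y hy => mul_nonneg (Real.log_nonneg (by nlinarith)) (by positivity)) hWtop
      simp only [mem_Ici] at hy; intro e; rw [e] at hy; linarith
    have hIicW : IntegrableOn (fun y : ℝ => Real.log (1 + y ^ 2) * ((y - x) ^ 2)⁻¹)
        (Iic (x - ε)) := by
      refine integrableOn_Iic_deriv_of_nonneg''
        (fun y hy => hWder y ?_)
        (fun y hy => mul_nonneg (Real.log_nonneg (by nlinarith)) (by positivity)) hWbot
      simp only [mem_Iic] at hy; intro e; rw [e] at hy; linarith
    have hIoi : IntegrableOn f (Ioi (x + ε)) := by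
      have p1 : IntegrableOn (fun y : ℝ => L * ((y - x) ^ 2)⁻¹) (Ioi (x + ε)) :=
        (intOn_inv_sq_Ioi (by linarith)).const_mul L
      refine IntegrableOn.congr_fun (p1.sub hIoiW) (fun y hy => ?_) measurableSet_Ioi
      show _ = (L - Real.log (1 + y ^ 2)) / (x - y) ^ 2
      rw [show (x - y) ^ 2 = (y - x) ^ 2 from by ring, div_eq_mul_inv, sub_mul]
      rfl
    have hIic : IntegrableOn f (Iic (x - ε)) := by
      have p1 : IntegrableOn (fun y : ℝ => L * ((y - x) ^ 2)⁻¹) (Iic (x - ε)) :=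
        (intOn_inv_sq_Iic (by linarith)).const_mul L
      refine IntegrableOn.congr_fun (p1.sub hIicW) (fun y hy => ?_) measurableSet_Iic
      show _ = (L - Real.log (1 + y ^ 2)) / (x - y) ^ 2
      rw [show (x - y) ^ 2 = (y - x) ^ 2 from by ring, div_eq_mul_inv, sub_mul]
      rfl
    exact (hIic.mono_set Iio_subset_Iic_self).union hIoi
  -- explicit truncated integral
  have key : ∀ ε : ℝ, 0 < ε → (∫ y in {y : ℝ | ε < |x - y|}, f y) =
      ((L - Real.log (1 + (x - ε) ^ 2)) * ε⁻¹ + (L - Real.log (1 + (x + ε) ^ 2)) * ε⁻¹)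
      + (a / 2) * (Real.log (1 + (x - ε) ^ 2) - Real.log (1 + (x + ε) ^ 2))
      - (a / x) * (Real.arctan (x - ε) - Real.arctan (x + ε)) - a / x * π := by
    intro ε hε
    have hε0 : ε ≠ 0 := hε.ne'
    have hIoi : IntegrableOn f (Ioi (x + ε)) :=
      (hunion ε hε).mono_set subset_union_right
    have hIic : IntegrableOn f (Iic (x - ε)) :=
      (integrableOn_Iic_iff_integrableOn_Iio).2 ((hunion ε hε).mono_set subset_union_left)
    have hdisj : Disjoint (Iio (x - ε)) (Ioi (x + ε)) := by
      rw [Set.disjoint_left]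
      intro y h1 h2
      simp only [mem_Iio, mem_Ioi] at h1 h2
      linarith
    rw [ray_eq hε, setIntegral_union hdisj measurableSet_Ioi
      ((hunion ε hε).mono_set subset_union_left) hIoi]
    have hIoi_val : (∫ y in Ioi (x + ε), f y) = -(a / x * (π / 2)) - G (x + ε) := by
      refine integral_Ioi_of_hasDerivAt_of_tendsto' (fun y hy => hder y ?_) hIoi hGtop
      simp only [mem_Ici] at hy; intro e; rw [e] at hy; linarith
    have hIio_val : (∫ y in Iio (x - ε), f y) = G (x - ε) - a / x * (π / 2) := by
      rw [← integral_Iic_eq_integral_Iio]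
      refine integral_Iic_of_hasDerivAt_of_tendsto' (fun y hy => hder y ?_) hIic hGbot
      simp only [mem_Iic] at hy; intro e; rw [e] at hy; linarith
    rw [hIoi_val, hIio_val]
    have e1 : G (x - ε) = (L - Real.log (1 + (x - ε) ^ 2)) * ε⁻¹
        + (a / 2) * (Real.log (1 + (x - ε) ^ 2) - Real.log (ε ^ 2))
        - (a / x) * Real.arctan (x - ε) := by
      have hb : G (x - ε) = (L - Real.log (1 + (x - ε) ^ 2)) * (x - (x - ε))⁻¹
          + (a / 2) * Real.log ((1 + (x - ε) ^ 2) / ((x - ε) - x) ^ 2)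
          - (a / x) * Real.arctan (x - ε) := rfl
      rw [hb, show x - (x - ε) = ε from by ring, show (x - ε - x) ^ 2 = ε ^ 2 from by ring,
        Real.log_div (by positivity) (by positivity)]
    have e2 : G (x + ε) = -((L - Real.log (1 + (x + ε) ^ 2)) * ε⁻¹)
        + (a / 2) * (Real.log (1 + (x + ε) ^ 2) - Real.log (ε ^ 2))
        - (a / x) * Real.arctan (x + ε) := by
      have hb : G (x + ε) = (L - Real.log (1 + (x + ε) ^ 2)) * (x - (x + ε))⁻¹
          + (a / 2) * Real.log ((1 + (x + ε) ^ 2) / ((x + ε) - x) ^ 2)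
          - (a / x) * Real.arctan (x + ε) := rfl
      rw [hb, show x - (x + ε) = -ε from by ring, show (x + ε - x) ^ 2 = ε ^ 2 from by ring,
        Real.log_div (by positivity) (by positivity), inv_neg, mul_neg]
    rw [e1, e2]
    ring
  -- limit of the explicit expression
  have hda : HasDerivAt (fun t : ℝ => Real.log (1 + t ^ 2)) a x := by
    have := hasDerivAt_logsq x
    rw [← ha] at this
    exact this
  have hslope := hasDerivAt_iff_tendsto_slope.1 hda
  have hmapP : Tendsto (fun ε : ℝ => x + ε) (𝓝[>] (0:ℝ)) (𝓝[≠] x) := by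
    refine tendsto_nhdsWithin_of_tendsto_nhds_of_eventually_within _ ?_ ?_
    · have h1 : Tendsto (fun ε : ℝ => x + ε) (𝓝 (0:ℝ)) (𝓝 x) := by
        have := Continuous.tendsto (by fun_prop : Continuous (fun ε : ℝ => x + ε)) 0
        simpa using this
      exact h1.mono_left nhdsWithin_le_nhds
    · filter_upwards [self_mem_nhdsWithin] with ε (hε : (0:ℝ) < ε)
      simp only [mem_compl_iff, mem_singleton_iff]
      intro e
      have : ε = 0 := by linarith [e]
      exact hε.ne' this
  have hmapM : Tendsto (fun ε : ℝ => x - ε) (𝓝[>] (0:ℝ)) (𝓝[≠] x) := by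
    refine tendsto_nhdsWithin_of_tendsto_nhds_of_eventually_within _ ?_ ?_
    · have h1 : Tendsto (fun ε : ℝ => x - ε) (𝓝 (0:ℝ)) (𝓝 x) := by
        have := Continuous.tendsto (by fun_prop : Continuous (fun ε : ℝ => x - ε)) 0
        simpa using this
      exact h1.mono_left nhdsWithin_le_nhds
    · filter_upwards [self_mem_nhdsWithin] with ε (hε : (0:ℝ) < ε)
      simp only [mem_compl_iff, mem_singleton_iff]
      intro e
      have : ε = 0 := by linarith [e]
      exact hε.ne' this
  have hsP : Tendsto (fun ε : ℝ => (L - Real.log (1 + (x + ε) ^ 2)) * ε⁻¹)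
      (𝓝[>] (0:ℝ)) (𝓝 (-a)) := by
    have h1 := (hslope.comp hmapP).neg
    refine h1.congr' ?_
    filter_upwards [self_mem_nhdsWithin] with ε (hε : (0:ℝ) < ε)
    show -(slope (fun t : ℝ => Real.log (1 + t ^ 2)) x (x + ε)) = _
    rw [slope_def_field, show x + ε - x = ε from by ring]
    rw [div_eq_mul_inv, ← neg_mul, neg_sub]
  have hsM : Tendsto (fun ε : ℝ => (L - Real.log (1 + (x - ε) ^ 2)) * ε⁻¹)
      (𝓝[>] (0:ℝ)) (𝓝 a) := by
    have h1 := hslope.comp hmapM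
    refine h1.congr' ?_
    filter_upwards [self_mem_nhdsWithin] with ε (hε : (0:ℝ) < ε)
    show slope (fun t : ℝ => Real.log (1 + t ^ 2)) x (x - ε) = _
    rw [slope_def_field, show x - ε - x = -ε from by ring]
    rw [div_neg, div_eq_mul_inv, ← neg_mul, neg_sub]
  have htail2 : Tendsto (fun ε : ℝ => (a / 2) *
      (Real.log (1 + (x - ε) ^ 2) - Real.log (1 + (x + ε) ^ 2))) (𝓝[>] (0:ℝ)) (𝓝 0) := by
    have hc : ContinuousAt (fun ε : ℝ => (a / 2) *
        (Real.log (1 + (x - ε) ^ 2) - Real.log (1 + (x + ε) ^ 2))) 0 :=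
      continuousAt_const.mul ((ContinuousAt.log (by fun_prop) (by positivity)).sub
        (ContinuousAt.log (by fun_prop) (by positivity)))
    have h2 := hc.tendsto.mono_left (nhdsWithin_le_nhds (s := Set.Ioi (0:ℝ)))
    simpa using h2
  have htail3 : Tendsto (fun ε : ℝ => (a / x) *
      (Real.arctan (x - ε) - Real.arctan (x + ε))) (𝓝[>] (0:ℝ)) (𝓝 0) := by
    have hc : ContinuousAt (fun ε : ℝ => (a / x) *
        (Real.arctan (x - ε) - Real.arctan (x + ε))) 0 :=
      continuousAt_const.mul
        (((Real.continuous_arctan.comp (continuous_const.sub continuous_id)).continuousAt).sub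
          ((Real.continuous_arctan.comp (continuous_const.add continuous_id)).continuousAt))
    have h2 := hc.tendsto.mono_left (nhdsWithin_le_nhds (s := Set.Ioi (0:ℝ)))
    simpa using h2
  have hEt := (((hsM.add hsP).add htail2).sub htail3).sub
    (tendsto_const_nhds :
      Tendsto (fun _ : ℝ => a / x * π) (𝓝[>] (0:ℝ)) (𝓝 (a / x * π)))
  have hval : a + -a + 0 - 0 - a / x * π = -(a / x) * π := by ring
  rw [hval] at hEt
  have hfinal := hEt.const_mul (1 / π)
  have hv2 : (1 / π) * (-(a / x) * π) = -2 / (1 + x ^ 2) := by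
    rw [ha]
    field_simp
  rw [hv2] at hfinal
  constructor
  · refine hfinal.congr' ?_
    filter_upwards [self_mem_nhdsWithin] with ε (hε : (0:ℝ) < ε)
    have hconv : (∫ y in {y : ℝ | ε < |x - y|},
        ((fun y : ℝ => Real.log (1 + y ^ 2)) x - Real.log (1 + y ^ 2)) / (x - y) ^ 2)
        = ∫ y in {y : ℝ | ε < |x - y|}, f y := rfl
    rw [hconv, key ε hε]
  · intro ε hε
    rw [ray_eq hε]
    exact hunion ε hε

end PVlog

end HalfAux

theorem statement16 (θ : ℝ) (hθ : 0 < θ)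
    (g : ℝ → ℝ) (hg : Continuous g) (hgnn : ∀ t : ℝ, 0 ≤ t → 0 ≤ g t)
    (u : ℝ → ℝ) (hu : Continuous u) (hubd : ∃ M : ℝ, ∀ x, |u x| ≤ M)
    (hupos : ∀ x, 0 < u x)
    (w : ℝ → ℝ) (hw : Continuous w)
    (hwlim : Tendsto w (cocompact ℝ) atBot)
    (heq : ∀ x : ℝ, HasHalfLapAt u x (θ * w x * g (u x) - u x)) :
    ∃ C d : ℝ, 0 < C ∧ 0 < d ∧ ∀ x : ℝ, d ≤ |x| → u x ≤ C / x ^ 2 := by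
  classical
  obtain ⟨M, hM⟩ := hubd
  have hM0 : 0 ≤ M := le_trans (abs_nonneg _) (hM 0)
  have hT : Tendsto w atTop atBot := hwlim.mono_left _root_.atTop_le_cocompact
  have hB : Tendsto w atBot atBot := hwlim.mono_left _root_.atBot_le_cocompact
  obtain ⟨r1, hr1⟩ := eventually_atTop.1 (hT.eventually (eventually_le_atBot (0:ℝ)))
  obtain ⟨r2, hr2⟩ := eventually_atBot.1 (hB.eventually (eventually_le_atBot (0:ℝ)))
  set R : ℝ := max 2 (max (|r1| + 1) (|r2| + 1)) with hR
  have hR2 : (2:ℝ) ≤ R := le_max_left _ _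
  have hwR : ∀ y : ℝ, R ≤ |y| → w y ≤ 0 := by
    intro y hy
    rcases le_or_gt 0 y with h | h
    · apply hr1
      have h0 : |y| = y := abs_of_nonneg h
      have h1 : |r1| + 1 ≤ R := le_trans (le_max_left _ _) (le_max_right _ _)
      linarith [le_abs_self r1]
    · apply hr2
      have h0 : |y| = -y := abs_of_neg h
      have h1 : |r2| + 1 ≤ R := le_trans (le_max_right _ _) (le_max_right _ _)
      linarith [neg_abs_le r2]
  set C : ℝ := (M + 1) * (1 + R ^ 2) with hC
  have hCpos : 0 < C := by
    have : (0:ℝ) < M + 1 := by linarith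
    positivity
  have hhnn : ∀ z : ℝ, 0 ≤ Real.log (1 + z ^ 2) := fun z => Real.log_nonneg (by nlinarith)
  -- step 1: the penalized comparison
  have key : ∀ δ : ℝ, 0 < δ → ∀ z : ℝ,
      u z ≤ C * (1 + z ^ 2)⁻¹ + δ * Real.log (1 + z ^ 2) := by
    intro δ hδ
    by_contra hcon
    push_neg at hcon
    obtain ⟨y0, hy0⟩ := hcon
    set v : ℝ → ℝ := fun y => u y - C * (1 + y ^ 2)⁻¹ - δ * Real.log (1 + y ^ 2) with hv
    have hvc : Continuous v := by
      refine (hu.sub (continuous_const.mul ?_)).sub (continuous_const.mul ?_)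
      · exact Continuous.inv₀ (by fun_prop) (fun y => by positivity)
      · exact Continuous.log (by fun_prop) (fun y => by positivity)
    have hcoc : Tendsto (fun y : ℝ => Real.log (1 + y ^ 2)) (cocompact ℝ) atTop := by
      have h1 : Tendsto (fun y : ℝ => ‖y‖) (cocompact ℝ) atTop := tendsto_norm_cocompact_atTop
      have hmono : Tendsto (fun y : ℝ => 1 + y ^ 2) (cocompact ℝ) atTop := by
        refine tendsto_atTop_mono (fun y => ?_) h1
        have := sq_abs y
        have := abs_nonneg y
        rw [Real.norm_eq_abs]
        nlinarith
      exact Real.tendsto_log_atTop.comp hmono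
    have hvtop : Tendsto v (cocompact ℝ) atBot := by
      have htend : Tendsto (fun y : ℝ => M + -(δ * Real.log (1 + y ^ 2)))
          (cocompact ℝ) atBot := by
        refine tendsto_atBot_add_const_left _ M ?_
        exact tendsto_neg_atTop_atBot.comp (hcoc.const_mul_atTop hδ)
      refine tendsto_atBot_mono (fun y => ?_) htend
      have h1 := hM y
      have h2 : 0 ≤ C * (1 + y ^ 2)⁻¹ := by positivity
      have h3 := le_abs_self (u y)
      simp only [hv]
      linarith
    obtain ⟨x0, hx0⟩ := hvc.exists_forall_ge hvtop
    have hv0 : 0 < v x0 := lt_of_lt_of_le (by simp only [hv]; linarith) (hx0 y0)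
    have hx0R : R < |x0| := by
      by_contra hle
      push_neg at hle
      have h1 : x0 ^ 2 ≤ R ^ 2 := by nlinarith [abs_nonneg x0, sq_abs x0, le_abs_self x0]
      have hpos1 : (0:ℝ) < 1 + x0 ^ 2 := by positivity
      have hpos2 : (0:ℝ) < 1 + R ^ 2 := by positivity
      have h2 : (1 + R ^ 2)⁻¹ ≤ (1 + x0 ^ 2)⁻¹ := by gcongr <;> linarith
      have h3 : M + 1 ≤ C * (1 + x0 ^ 2)⁻¹ := by
        calc M + 1 = C * (1 + R ^ 2)⁻¹ := by
              rw [hC]; field_simp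
          _ ≤ C * (1 + x0 ^ 2)⁻¹ := by gcongr
      have h4 := hM x0
      have h5 := le_abs_self (u x0)
      have h6 := hhnn x0
      have h7 : 0 ≤ δ * Real.log (1 + x0 ^ 2) := mul_nonneg hδ.le h6
      simp only [hv] at hv0
      linarith
    have hx0ne : x0 ≠ 0 := by
      intro e
      rw [e] at hx0R
      simp at hx0R
      linarith
    obtain ⟨pvlog, intlog⟩ := HalfAux.pv_log hx0ne
    have hint1 : ∀ ε : ℝ, 0 < ε → IntegrableOn
        (fun y => (u x0 - u y) / (x0 - y) ^ 2) {y | ε < |x0 - y|} := by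
      intro ε hε
      rw [HalfAux.ray_eq hε]
      refine HalfAux.intOn_ray_bounded (A := |u x0| + M)
        ((measurable_const.sub hu.measurable)) hε (fun y => ?_)
      calc |u x0 - u y| ≤ |u x0| + |u y| := abs_sub _ _
        _ ≤ |u x0| + M := by linarith [hM y]
    have hint2 : ∀ ε : ℝ, 0 < ε → IntegrableOn
        (fun y => ((fun t : ℝ => (1 + t ^ 2)⁻¹) x0 - (1 + y ^ 2)⁻¹) / (x0 - y) ^ 2)
        {y | ε < |x0 - y|} := by
      intro ε hε
      rw [HalfAux.ray_eq hε]
      refine HalfAux.intOn_ray_bounded (A := (1 + x0 ^ 2)⁻¹ + 1)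
        (measurable_const.sub (by fun_prop)) hε (fun y => ?_)
      have h1 : (0:ℝ) < 1 + y ^ 2 := by positivity
      have h2 : (1 + y ^ 2)⁻¹ ≤ 1 := by
        have h2' : (1 + y ^ 2)⁻¹ ≤ (1:ℝ)⁻¹ := by gcongr <;> nlinarith
        simpa using h2'
      have h3 : (0:ℝ) ≤ (1 + y ^ 2)⁻¹ := by positivity
      have h4 : (0:ℝ) ≤ (1 + x0 ^ 2)⁻¹ := by positivity
      show |(1 + x0 ^ 2)⁻¹ - (1 + y ^ 2)⁻¹| ≤ (1 + x0 ^ 2)⁻¹ + 1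
      rw [abs_sub_comm]
      calc |(1 + y ^ 2)⁻¹ - (1 + x0 ^ 2)⁻¹| ≤ |(1 + y ^ 2)⁻¹| + |(1 + x0 ^ 2)⁻¹| := abs_sub _ _
        _ ≤ (1 + x0 ^ 2)⁻¹ + 1 := by
            rw [abs_of_nonneg h3, abs_of_nonneg h4]; linarith
    have hint3 : ∀ ε : ℝ, 0 < ε → IntegrableOn
        (fun y => ((fun t : ℝ => Real.log (1 + t ^ 2)) x0 - Real.log (1 + y ^ 2)) / (x0 - y) ^ 2)
        {y | ε < |x0 - y|} := intlog
    have hcombo := HalfAux.combo (c2 := C) (c3 := δ)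
      (heq x0) (HalfAux.pv_phi x0) pvlog hint1 hint2 hint3
    have hLv := HalfAux.nonneg_of_max hcombo hx0
    -- arithmetic contradiction
    have ht5 : (5:ℝ) ≤ 1 + x0 ^ 2 := by nlinarith [sq_abs x0, abs_nonneg x0]
    have htpos : (0:ℝ) < 1 + x0 ^ 2 := by linarith
    have hlogt : 1 ≤ Real.log (1 + x0 ^ 2) := by
      rw [Real.le_log_iff_exp_le htpos]
      calc Real.exp 1 ≤ 2.7182818286 := Real.exp_one_lt_d9.le
        _ ≤ 5 := by norm_num
        _ ≤ 1 + x0 ^ 2 := ht5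
    have hwg : θ * w x0 * g (u x0) ≤ 0 := by
      have h1 : w x0 ≤ 0 := hwR x0 hx0R.le
      have h2 : 0 ≤ g (u x0) := hgnn _ (hupos x0).le
      have h3 : θ * w x0 ≤ 0 := mul_nonpos_of_nonneg_of_nonpos hθ.le h1
      exact mul_nonpos_of_nonpos_of_nonneg h3 h2
    have f2 : C * (1 + x0 ^ 2)⁻¹ + δ * Real.log (1 + x0 ^ 2) < u x0 := by
      simp only [hv] at hv0; linarith
    have f4 : C * ((1 - x0 ^ 2) / (1 + x0 ^ 2) ^ 2) + C * (1 + x0 ^ 2)⁻¹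
        = 2 * C / (1 + x0 ^ 2) ^ 2 := by
      field_simp
      ring
    have f5 : δ * (-2 / (1 + x0 ^ 2)) + δ * Real.log (1 + x0 ^ 2) ≥ 0 := by
      have h1 : -2 / (1 + x0 ^ 2) + Real.log (1 + x0 ^ 2) ≥ 0 := by
        have h2 : 2 / (1 + x0 ^ 2) ≤ 1 := by
          rw [div_le_one htpos]; linarith
        have h3 : -2 / (1 + x0 ^ 2) = -(2 / (1 + x0 ^ 2)) := by ring
        linarith
      nlinarith
    have f6 : (0:ℝ) < 2 * C / (1 + x0 ^ 2) ^ 2 := by positivity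
    linarith [hLv, hwg, f2, f4, f5, f6]
  -- step 2: let δ → 0
  have hCphi : ∀ z : ℝ, u z ≤ C * (1 + z ^ 2)⁻¹ := by
    intro z
    by_contra hlt
    push_neg at hlt
    set p : ℝ := u z - C * (1 + z ^ 2)⁻¹ with hp
    have hppos : 0 < p := by simp only [hp]; linarith
    set lg : ℝ := Real.log (1 + z ^ 2) with hlg
    have hlgnn : 0 ≤ lg := hhnn z
    have hδpos : 0 < p / (2 * (lg + 1)) := by positivity
    have hkey := key (p / (2 * (lg + 1))) hδpos z
    have hmul : (p / (2 * (lg + 1))) * lg < p := by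
      rw [div_mul_eq_mul_div, div_lt_iff₀ (by positivity)]
      nlinarith
    simp only [← hlg] at hkey
    linarith
  -- conclusion
  refine ⟨C, R, hCpos, by linarith, fun z hz => ?_⟩
  have hzne : z ≠ 0 := by
    intro e
    rw [e] at hz
    simp at hz
    linarith
  have hz2 : (0:ℝ) < z ^ 2 := by positivity
  calc u z ≤ C * (1 + z ^ 2)⁻¹ := hCphi z
    _ = C / (1 + z ^ 2) := (div_eq_mul_inv C _).symm
    _ ≤ C / z ^ 2 := by gcongr; linarith
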